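/- arXiv:1407.0664 — 4 statements merged into one kernel-verified Lean document; each statement's English description precedes it below -/
import Mathlib

section
/- Let H be a complex Hilbert space and M a von Neumann algebra on H of type II₁ with a faithful normal tracial state ρ. Then M has Property Γ̂ (the net/weak-operator-topology version) if and only if M has Property Γ with respect to ρ (the ε–2-norm version). -/
set_option maxHeartbeats 1000000
set_option synthInstance.maxHeartbeats 400000

open scoped ComplexOrder
open Filter Topology

noncomputable section

namespace Paper

variable {H : Type*} [NormedAddCommGroup H] [InnerProductSpace ℂ H] [CompleteSpace H]

/-- Convergence in the weak operator topology along a filter. -/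
def WOTConv {E : Type*} [NormedAddCommGroup E] [InnerProductSpace ℂ E] {ι : Type*}
    (l : Filter ι) (T : ι → E →L[ℂ] E) (S : E →L[ℂ] E) : Prop :=
  ∀ x y : E, Tendsto (fun t => (inner ℂ (T t x) y : ℂ)) l (𝓝 (inner ℂ (S x) y))

/-- `p` is a (self-adjoint idempotent) projection. -/
def IsProjection (p : H →L[ℂ] H) : Prop := star p = p ∧ p * p = p

/-- Two projections are (Murray-von Neumann) equivalent in `S`. -/
def EquivProj (S : Set (H →L[ℂ] H)) (p q : H →L[ℂ] H) : Prop :=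
  ∃ v ∈ S, star v * v = p ∧ v * star v = q

/-- `ρ` is a faithful normal tracial state on (the von Neumann algebra whose underlying
set is) `S`. -/
structure IsFNTState (S : Set (H →L[ℂ] H)) (ρ : (H →L[ℂ] H) →ₗ[ℂ] ℂ) : Prop where
  map_one : ρ 1 = 1
  nonneg : ∀ a ∈ S, 0 ≤ ρ (star a * a)
  tracial : ∀ a ∈ S, ∀ b ∈ S, ρ (a * b) = ρ (b * a)
  faithful : ∀ a ∈ S, ρ (star a * a) = 0 → a = 0
  normal : ∀ {ι : Type} (l : Filter ι) (T : ι → H →L[ℂ] H) (T' : H →L[ℂ] H),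
    (∀ t, T t ∈ S) → (∀ t, ‖T t‖ ≤ 1) → T' ∈ S → ‖T'‖ ≤ 1 →
    WOTConv l T T' → Tendsto (fun t => ρ (T t)) l (𝓝 (ρ T'))

/-- The 2-norm `‖a‖₂ = √ρ(a*a)` associated to a state `ρ`. -/
def norm2 (ρ : (H →L[ℂ] H) →ₗ[ℂ] ℂ) (a : H →L[ℂ] H) : ℝ :=
  Real.sqrt (ρ (star a * a)).re

/-- `M` is a von Neumann algebra of type II₁: it admits a faithful normal tracial state and
contains no nonzero projection `p` with `pMp` commutative. -/
def IsTypeII1 (M : VonNeumannAlgebra H) : Prop :=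
  (∃ ρ : (H →L[ℂ] H) →ₗ[ℂ] ℂ, IsFNTState (M : Set (H →L[ℂ] H)) ρ) ∧
  ∀ p ∈ M, IsProjection p → p ≠ 0 →
    ¬ (∀ x ∈ M, ∀ y ∈ M, p * x * p * (p * y * p) = p * y * p * (p * x * p))

/-- Property Γ (the ε–2-norm version) for the von Neumann algebra with underlying set `S`,
with respect to the faithful normal tracial state `ρ`. -/
def PropertyGammaOn (S : Set (H →L[ℂ] H)) (ρ : (H →L[ℂ] H) →ₗ[ℂ] ℂ) : Prop :=
  ∀ ε : ℝ, 0 < ε → ∀ n : ℕ, 0 < n → ∀ (k : ℕ) (a : Fin k → H →L[ℂ] H), (∀ j, a j ∈ S) →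
    ∃ p : Fin n → H →L[ℂ] H,
      (∀ i, p i ∈ S ∧ IsProjection (p i)) ∧
      (∀ i j, i ≠ j → p i * p j = 0) ∧
      (∀ i j, EquivProj S (p i) (p j)) ∧
      (∑ i, p i) = 1 ∧
      ∀ i j, norm2 ρ (p i * a j - a j * p i) < ε

/-- Property Γ̂ : the net/weak-operator-topology version of Property Γ. -/
def PropertyGammaHat (M : VonNeumannAlgebra H) : Prop :=
  ∀ (k : ℕ) (a : Fin k → H →L[ℂ] H), (∀ j, a j ∈ M) → ∀ n : ℕ, 0 < n →
    ∃ (Λ : Type) (_ : Preorder Λ), Nonempty Λ ∧ IsDirected Λ (· ≤ ·) ∧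
      ∃ p : Fin n → Λ → H →L[ℂ] H,
        (∀ i lam, p i lam ∈ M ∧ IsProjection (p i lam)) ∧
        (∀ lam, ∀ i j, i ≠ j → p i lam * p j lam = 0) ∧
        (∀ lam i j, EquivProj (M : Set (H →L[ℂ] H)) (p i lam) (p j lam)) ∧
        (∀ lam, (∑ i, p i lam) = 1) ∧
        ∀ i j, WOTConv atTop
          (fun lam => star (p i lam * a j - a j * p i lam) * (p i lam * a j - a j * p i lam))
          (0 : H →L[ℂ] H)

/-- `R` is a hyperfinite type II₁ subfactor of `M`. -/
structure IsHyperfiniteII1Subfactor (M R : VonNeumannAlgebra H) : Prop where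
  subset : (R : Set (H →L[ℂ] H)) ⊆ (M : Set (H →L[ℂ] H))
  infiniteDimensional : ¬ ∃ (d : ℕ) (f : Fin d → H →L[ℂ] H),
    ∀ x ∈ R, x ∈ Submodule.span ℂ (Set.range f)
  factor : ∀ x ∈ R, (∀ y ∈ R, x * y = y * x) → ∃ c : ℂ, x = c • (1 : H →L[ℂ] H)
  hyperfinite : ∃ A : ℕ → StarSubalgebra ℂ (H →L[ℂ] H),
    Monotone A ∧
    (∀ n, (A n : Set (H →L[ℂ] H)) ⊆ (R : Set (H →L[ℂ] H))) ∧
    (∀ n, ∃ (d : ℕ) (f : Fin d → H →L[ℂ] H),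
      ∀ x ∈ A n, x ∈ Submodule.span ℂ (Set.range f)) ∧
    ∀ x ∈ R, ∀ ε : ℝ, 0 < ε → ∀ (m : ℕ) (v : Fin m → H),
      ∃ y : H →L[ℂ] H, (∃ n, y ∈ A n) ∧ ∀ i, ‖(y - x) (v i)‖ < ε

/-- Membership of all matrix entries in a set. -/
def MatMem {n : ℕ} (S : Set (H →L[ℂ] H)) (A : Matrix (Fin n) (Fin n) (H →L[ℂ] H)) : Prop :=
  ∀ i j, A i j ∈ S

/-- The identification `Θ` of an `n × n` matrix of operators on `H` with an operator on the
`ℓ²`-direct sum `H⁽ⁿ⁾` of `n` copies of `H`. -/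
def Theta (n : ℕ) (T : Matrix (Fin n) (Fin n) (H →L[ℂ] H)) :
    PiLp 2 (fun _ : Fin n => H) →L[ℂ] PiLp 2 (fun _ : Fin n => H) :=
  ((PiLp.continuousLinearEquiv 2 ℂ (fun _ : Fin n => H)).symm.toContinuousLinearMap).comp
    (ContinuousLinearMap.pi
      (fun i => ∑ j, (T i j).comp
        ((ContinuousLinearMap.proj (R := ℂ) (φ := fun _ : Fin n => H) j).comp
          (PiLp.continuousLinearEquiv 2 ℂ (fun _ : Fin n => H)).toContinuousLinearMap)))

instance piLpComplete (n : ℕ) : CompleteSpace (PiLp 2 (fun _ : Fin n => H)) :=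
  inferInstance

/-- `τ` is the center-valued trace on `M_n(M)`. -/
structure IsCenterValuedTrace (M : VonNeumannAlgebra H) (n : ℕ)
    (τ : Matrix (Fin n) (Fin n) (H →L[ℂ] H) → Matrix (Fin n) (Fin n) (H →L[ℂ] H)) :
    Prop where
  map_add : ∀ A B, MatMem (M : Set (H →L[ℂ] H)) A → MatMem (M : Set (H →L[ℂ] H)) B →
    τ (A + B) = τ A + τ B
  map_smul : ∀ (c : ℂ) A, MatMem (M : Set (H →L[ℂ] H)) A → τ (c • A) = c • τ A
  mem : ∀ A, MatMem (M : Set (H →L[ℂ] H)) A → MatMem (M : Set (H →L[ℂ] H)) (τ A)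
  central : ∀ A, MatMem (M : Set (H →L[ℂ] H)) A → ∀ B, MatMem (M : Set (H →L[ℂ] H)) B →
    τ A * B = B * τ A
  tracial : ∀ A B, MatMem (M : Set (H →L[ℂ] H)) A → MatMem (M : Set (H →L[ℂ] H)) B →
    τ (A * B) = τ (B * A)
  fix_central : ∀ Z, MatMem (M : Set (H →L[ℂ] H)) Z →
    (∀ B, MatMem (M : Set (H →L[ℂ] H)) B → Z * B = B * Z) → τ Z = Z
  positive : ∀ A, MatMem (M : Set (H →L[ℂ] H)) A → (Theta n (τ (star A * A))).IsPositive
  normal : ∀ {ι : Type} (l : Filter ι) (T : ι → Matrix (Fin n) (Fin n) (H →L[ℂ] H)) (T'),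
    (∀ t, MatMem (M : Set (H →L[ℂ] H)) (T t)) → (∀ t, ‖Theta n (T t)‖ ≤ 1) →
    MatMem (M : Set (H →L[ℂ] H)) T' → ‖Theta n T'‖ ≤ 1 →
    WOTConv l (fun t => Theta n (T t)) (Theta n T') →
    WOTConv l (fun t => Theta n (τ (T t))) (Theta n (τ T'))

/-- The quantity `γ_n(A) = (‖A‖² + n‖τ_n(A*A)‖)^{1/2}`. -/
def gammaN (n : ℕ)
    (τ : Matrix (Fin n) (Fin n) (H →L[ℂ] H) → Matrix (Fin n) (Fin n) (H →L[ℂ] H))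
    (A : Matrix (Fin n) (Fin n) (H →L[ℂ] H)) : ℝ :=
  Real.sqrt (‖Theta n A‖ ^ 2 + n * ‖Theta n (τ (star A * A))‖)

/-- The `n`-fold amplification `φ⁽ⁿ⁾` of a `k`-linear map `φ`, defined entrywise by
`(φ⁽ⁿ⁾(A₁,…,A_k))_{ij} = Σ_{j₁,…,j_{k−1}} φ((A₁)_{i j₁}, (A₂)_{j₁ j₂}, …, (A_k)_{j_{k−1} j})`. -/
def ampl {k n : ℕ} (φ : (Fin k → (H →L[ℂ] H)) → (H →L[ℂ] H))
    (A : Fin k → Matrix (Fin n) (Fin n) (H →L[ℂ] H)) : Matrix (Fin n) (Fin n) (H →L[ℂ] H) :=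
  fun i j => ∑ f : Fin (k + 1) → Fin n,
    if f 0 = i ∧ f (Fin.last k) = j then φ (fun l => A l (f l.castSucc) (f l.succ)) else 0

/-- `φ` is `R`-multimodular (on tuples from `Mset`). -/
def Multimodular {k : ℕ} (Rset Mset : Set (H →L[ℂ] H))
    (φ : (Fin (k + 1) → H →L[ℂ] H) → H →L[ℂ] H) : Prop :=
  ∀ s ∈ Rset, ∀ a : Fin (k + 1) → H →L[ℂ] H, (∀ i, a i ∈ Mset) →
    s * φ a = φ (Function.update a 0 (s * a 0)) ∧
    φ a * s = φ (Function.update a (Fin.last k) (a (Fin.last k) * s)) ∧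
    ∀ i : Fin k, φ (Function.update a i.castSucc (a i.castSucc * s))
      = φ (Function.update a i.succ (s * a i.succ))

/-- `φ` is separately normal: fixing all variables but one, bounded weak-operator
convergent nets are sent to weak-operator convergent nets. -/
def SepNormal {k : ℕ} (Mset : Set (H →L[ℂ] H))
    (φ : (Fin k → H →L[ℂ] H) → H →L[ℂ] H) : Prop :=
  ∀ (i : Fin k) (a : Fin k → H →L[ℂ] H), (∀ j, a j ∈ Mset) →
    ∀ {ι : Type} (l : Filter ι) (b : ι → H →L[ℂ] H) (b' : H →L[ℂ] H) (C : ℝ),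
      (∀ t, b t ∈ Mset) → (∀ t, ‖b t‖ ≤ C) → b' ∈ Mset →
      WOTConv l b b' →
      WOTConv l (fun t => φ (Function.update a i (b t))) (φ (Function.update a i b'))

/-- The map `φ_{σ,p}`: the variables in `σ` are replaced by commutators with `p`. -/
def phiSigma {k : ℕ} (φ : (Fin k → H →L[ℂ] H) → H →L[ℂ] H) (p : H →L[ℂ] H)
    (σ : Finset (Fin k)) (a : Fin k → H →L[ℂ] H) : H →L[ℂ] H :=
  φ (fun i => if i ∈ σ then p * a i - a i * p else a i)

/-- The map `φ_{σ,p,i}` (for `i ≤ l(σ)`, the least element of `σ`). -/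
def phiSigmaI {k : ℕ} (φ : (Fin k → H →L[ℂ] H) → H →L[ℂ] H) (p : H →L[ℂ] H)
    (σ : Finset (Fin k)) (hσ : σ.Nonempty) (i : Fin k) (a : Fin k → H →L[ℂ] H) :
    H →L[ℂ] H :=
  φ (fun j =>
    if j = i then
      (if i = σ.min' hσ then p * (p * a i - a i * p) else p * a i - a i * p)
    else if j ∈ σ then p * a j - a j * p else a j)

/-- The Hochschild coboundary operator `∂`. -/
def cobound {k : ℕ} (φ : (Fin k → H →L[ℂ] H) → H →L[ℂ] H)
    (a : Fin (k + 1) → H →L[ℂ] H) : H →L[ℂ] H :=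
  a 0 * φ (fun i => a i.succ)
    + (∑ i : Fin k, (-1 : ℂ) ^ ((i : ℕ) + 1) •
        φ (fun j => if (j : ℕ) < (i : ℕ) then a j.castSucc
            else if j = i then a i.castSucc * a i.succ else a j.succ))
    + (-1 : ℂ) ^ (k + 1) • (φ (fun i => a i.castSucc) * a (Fin.last k))

/-! ### Auxiliary lemmas for statement1 -/

section Statement1Aux

lemma isClosed_centralizer' (S : Set (H →L[ℂ] H)) : IsClosed (Set.centralizer S) := by
  have : Set.centralizer S = ⋂ y ∈ S, {z : H →L[ℂ] H | y * z = z * y} := by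
    ext z; simp [Set.mem_centralizer_iff, Set.mem_iInter]
  rw [this]
  exact isClosed_biInter fun y _ => isClosed_eq (continuous_const.mul continuous_id)
    (continuous_id.mul continuous_const)

lemma mem_vna_of_commutes (M : VonNeumannAlgebra H) {z : H →L[ℂ] H}
    (h : ∀ y ∈ Set.centralizer (M : Set (H →L[ℂ] H)), z * y = y * z) :
    z ∈ (M : Set (H →L[ℂ] H)) := by
  rw [← M.centralizer_centralizer]
  exact Set.mem_centralizer_iff.mpr fun y hy => (h y hy).symm

/-- Positive square root of a nonneg element of a von Neumann algebra stays in it. -/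
lemma exists_sqrt (M : VonNeumannAlgebra H) {d : H →L[ℂ] H}
    (hdM : d ∈ (M : Set (H →L[ℂ] H))) (hd : 0 ≤ d) :
    ∃ s, s ∈ (M : Set (H →L[ℂ] H)) ∧ star s * s = d := by
  have hsa : IsSelfAdjoint d := IsSelfAdjoint.of_nonneg hd
  refine ⟨cfc Real.sqrt d, ?_, ?_⟩
  · -- membership via double commutant
    apply mem_vna_of_commutes
    intro y hy
    have hdy : d * y = y * d := Set.mem_centralizer_iff.mp hy d hdM
    have key : ∀ f : C(spectrum ℝ d, ℝ), cfcHom hsa f * y = y * cfcHom hsa f := by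
      intro f
      induction f using ContinuousMap.induction_on_of_compact with
      | const r =>
        have : (ContinuousMap.const (spectrum ℝ d) r)
            = algebraMap ℝ C(spectrum ℝ d, ℝ) r := rfl
        rw [this, AlgHomClass.commutes]
        simp [Algebra.algebraMap_eq_smul_one, smul_mul_assoc, mul_smul_comm]
      | id =>
        rw [cfcHom_id hsa, hdy]
      | star_id =>
        have : star (ContinuousMap.restrict (spectrum ℝ d) (ContinuousMap.id ℝ))
            = ContinuousMap.restrict (spectrum ℝ d) (ContinuousMap.id ℝ) := by
          ext x; exact star_trivial _
        rw [this, cfcHom_id hsa, hdy]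
      | add f g hf hg => rw [map_add, add_mul, mul_add, hf, hg]
      | mul f g hf hg =>
        rw [map_mul, mul_assoc, hg, ← mul_assoc, hf, mul_assoc]
      | frequently f hf =>
        have hcl : IsClosed {f : C(spectrum ℝ d, ℝ) | cfcHom hsa f * y = y * cfcHom hsa f} :=
          isClosed_eq (((cfcHom_isClosedEmbedding hsa).continuous).mul continuous_const)
            (continuous_const.mul (cfcHom_isClosedEmbedding hsa).continuous)
        exact hcl.closure_subset (mem_closure_iff_frequently.mpr hf)
    have hcont : ContinuousOn Real.sqrt (spectrum ℝ d) :=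
      Real.continuous_sqrt.continuousOn
    rw [cfc_apply Real.sqrt d hsa hcont]
    exact key _
  · have hs' : IsSelfAdjoint (cfc Real.sqrt d) := cfc_predicate _ _
    rw [hs'.star_eq, ← cfc_mul Real.sqrt Real.sqrt d]
    have : cfc (fun x => Real.sqrt x * Real.sqrt x) d = cfc (id : ℝ → ℝ) d := by
      apply cfc_congr
      intro x hx
      have hx0 : (0:ℝ) ≤ x := spectrum_nonneg_of_nonneg hd hx
      simp [Real.mul_self_sqrt hx0]
    rw [this, cfc_id ℝ d hsa]

lemma norm_le_one_of_isProjection {p : H →L[ℂ] H}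
    (hp : IsProjection p) : ‖p‖ ≤ 1 := by
  refine ContinuousLinearMap.opNorm_le_bound p zero_le_one (fun x => ?_)
  rw [one_mul]
  have h : (inner ℂ (p x) (p x) : ℂ) = inner ℂ x (p x) := by
    have h := ContinuousLinearMap.adjoint_inner_left p (p x) x
    rw [← ContinuousLinearMap.star_eq_adjoint, hp.1] at h
    calc (inner ℂ (p x) (p x) : ℂ) = inner ℂ x (p (p x)) := h
      _ = inner ℂ x ((p * p) x) := rfl
      _ = inner ℂ x (p x) := by rw [hp.2]
  have h2 : ‖(inner ℂ x (p x) : ℂ)‖ = ‖p x‖ ^ 2 := by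
    rw [← h, inner_self_eq_norm_sq_to_K (𝕜 := ℂ)]
    simp [norm_pow]
  nlinarith [norm_inner_le_norm (𝕜 := ℂ) x (p x), norm_nonneg (p x), norm_nonneg x]

/-- Along an ultrafilter, a uniformly bounded family of operators in a von Neumann algebra
has a WOT-limit in the algebra. -/
lemma exists_wot_ultralimit (M : VonNeumannAlgebra H) {ι : Type} (u : Ultrafilter ι)
    (T : ι → H →L[ℂ] H) {C : ℝ} (hC : 0 ≤ C)
    (hmem : ∀ t, T t ∈ (M : Set (H →L[ℂ] H))) (hbd : ∀ t, ‖T t‖ ≤ C) :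
    ∃ S : H →L[ℂ] H, S ∈ (M : Set (H →L[ℂ] H)) ∧ ‖S‖ ≤ C ∧ WOTConv (↑u) T S := by
  classical
  -- pointwise ultrafilter limits
  have key : ∀ x y : H, ∃ z : ℂ, Tendsto (fun t => (inner ℂ (T t x) y : ℂ)) ↑u (𝓝 z) := by
    intro x y
    have hcpt : IsCompact (Metric.closedBall (0:ℂ) (C * ‖x‖ * ‖y‖)) :=
      isCompact_closedBall _ _
    have hle : ↑(u.map fun t => (inner ℂ (T t x) y : ℂ)) ≤
        𝓟 (Metric.closedBall (0:ℂ) (C * ‖x‖ * ‖y‖)) := by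
      rw [Filter.le_principal_iff, Ultrafilter.coe_map, Filter.mem_map]
      refine Filter.univ_mem' (fun t => ?_)
      simp only [Set.mem_preimage, Metric.mem_closedBall, dist_zero_right]
      calc ‖(inner ℂ (T t x) y : ℂ)‖ ≤ ‖T t x‖ * ‖y‖ := norm_inner_le_norm _ _
        _ ≤ (C * ‖x‖) * ‖y‖ := by
            have h1 : ‖T t x‖ ≤ C * ‖x‖ :=
              le_trans ((T t).le_opNorm x) (by gcongr; exact hbd t)
            exact mul_le_mul_of_nonneg_right h1 (norm_nonneg _)
        _ = C * ‖x‖ * ‖y‖ := by ring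
    obtain ⟨z, _, hz⟩ := hcpt.ultrafilter_le_nhds _ hle
    exact ⟨z, hz⟩
  choose F hF using key
  have hFbd : ∀ x y, ‖F x y‖ ≤ C * ‖x‖ * ‖y‖ := by
    intro x y
    refine le_of_tendsto (hF x y).norm (Filter.univ_mem' (fun t => ?_))
    calc ‖(inner ℂ (T t x) y : ℂ)‖ ≤ ‖T t x‖ * ‖y‖ := norm_inner_le_norm _ _
      _ ≤ (C * ‖x‖) * ‖y‖ := mul_le_mul_of_nonneg_right
          (le_trans ((T t).le_opNorm x) (by gcongr; exact hbd t)) (norm_nonneg _)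
      _ = C * ‖x‖ * ‖y‖ := by ring
  -- the functional y ↦ F x y
  have hadd : ∀ x y y', F x (y + y') = F x y + F x y' := by
    intro x y y'
    refine tendsto_nhds_unique ?_ ((hF x y).add (hF x y'))
    have : (fun t => (inner ℂ (T t x) (y + y') : ℂ))
        = fun t => (inner ℂ (T t x) y : ℂ) + inner ℂ (T t x) y' := by
      funext t; exact inner_add_right _ _ _
    rw [← this]; exact hF x (y + y')
  have hsmul : ∀ (c : ℂ) x y, F x (c • y) = c * F x y := by
    intro c x y
    refine tendsto_nhds_unique ?_ ((hF x y).const_mul c)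
    have : (fun t => (inner ℂ (T t x) (c • y) : ℂ))
        = fun t => c * (inner ℂ (T t x) y : ℂ) := by
      funext t; exact inner_smul_right _ _ _
    rw [← this]; exact hF x (c • y)
  set φ : H → (H →L[ℂ] ℂ) := fun x => LinearMap.mkContinuous
    { toFun := F x, map_add' := hadd x, map_smul' := fun c y => hsmul c x y }
    (C * ‖x‖) (fun y => by simpa [mul_assoc] using hFbd x y) with hφ
  set S0 : H → H := fun x => (InnerProductSpace.toDual ℂ H).symm (φ x) with hS0
  have hS0inner : ∀ x y, (inner ℂ (S0 x) y : ℂ) = F x y := by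
    intro x y; rw [hS0]; exact InnerProductSpace.toDual_symm_apply
  have hS0add : ∀ x x', S0 (x + x') = S0 x + S0 x' := by
    intro x x'
    refine ext_inner_right ℂ (fun w => ?_)
    rw [hS0inner, inner_add_left, hS0inner, hS0inner]
    refine tendsto_nhds_unique ?_ ((hF x w).add (hF x' w))
    have : (fun t => (inner ℂ (T t (x + x')) w : ℂ))
        = fun t => (inner ℂ (T t x) w : ℂ) + inner ℂ (T t x') w := by
      funext t; rw [map_add, inner_add_left]
    rw [← this]; exact hF (x + x') w
  have hS0smul : ∀ (c : ℂ) x, S0 (c • x) = c • S0 x := by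
    intro c x
    refine ext_inner_right ℂ (fun w => ?_)
    rw [hS0inner, inner_smul_left, hS0inner]
    refine tendsto_nhds_unique ?_ ((hF x w).const_mul (starRingEnd ℂ c))
    have : (fun t => (inner ℂ (T t (c • x)) w : ℂ))
        = fun t => (starRingEnd ℂ c) * (inner ℂ (T t x) w : ℂ) := by
      funext t; rw [map_smul, inner_smul_left]
    rw [← this]; exact hF (c • x) w
  have hS0bd : ∀ x, ‖S0 x‖ ≤ C * ‖x‖ := by
    intro x
    rw [hS0]
    rw [LinearIsometryEquiv.norm_map]
    exact LinearMap.mkContinuous_norm_le _ (by positivity) _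
  set S : H →L[ℂ] H := LinearMap.mkContinuous
    { toFun := S0, map_add' := hS0add, map_smul' := hS0smul } C hS0bd with hS
  have hSinner : ∀ x y, (inner ℂ (S x) y : ℂ) = F x y := fun x y => hS0inner x y
  have hconv : WOTConv (↑u) T S := by
    intro x y; rw [hSinner]; exact hF x y
  refine ⟨S, ?_, ?_, hconv⟩
  · -- membership via double commutant
    apply mem_vna_of_commutes
    intro y hy
    refine ContinuousLinearMap.ext (fun x => ?_)
    have lhs : (S * y) x = S (y x) := rfl
    have rhs : (y * S) x = y (S x) := rfl
    rw [lhs, rhs]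
    refine ext_inner_right ℂ (fun w => ?_)
    have h1 : Tendsto (fun t => (inner ℂ (T t (y x)) w : ℂ)) ↑u (𝓝 (inner ℂ (S (y x)) w)) := by
      rw [hSinner]; exact hF (y x) w
    have h2 : Tendsto (fun t => (inner ℂ (T t (y x)) w : ℂ))
        ↑u (𝓝 (inner ℂ (y (S x)) w)) := by
      have heq : (fun t => (inner ℂ (T t (y x)) w : ℂ))
          = fun t => (inner ℂ (T t x) ((ContinuousLinearMap.adjoint y) w) : ℂ) := by
        funext t
        have hc : T t * y = y * T t := Set.mem_centralizer_iff.mp hy (T t) (hmem t)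
        have : T t (y x) = y (T t x) := by
          have := congrArg (fun (A : H →L[ℂ] H) => A x) hc
          simpa using this
        rw [this, ← ContinuousLinearMap.adjoint_inner_right]
      rw [heq]
      have h3 := hF x ((ContinuousLinearMap.adjoint y) w)
      rw [← hSinner] at h3
      rw [show (inner ℂ (y (S x)) w : ℂ) = inner ℂ (S x) ((ContinuousLinearMap.adjoint y) w) from
        (ContinuousLinearMap.adjoint_inner_right y (S x) w).symm]
      exact h3
    exact tendsto_nhds_unique h1 h2
  · exact LinearMap.mkContinuous_norm_le _ hC _

/-- Scaled version of normality. -/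
lemma rho_tendsto_of_wot (M : VonNeumannAlgebra H) {ρ : (H →L[ℂ] H) →ₗ[ℂ] ℂ}
    (hρ : IsFNTState (M : Set (H →L[ℂ] H)) ρ) {ι : Type} (l : Filter ι)
    (T : ι → H →L[ℂ] H) (T' : H →L[ℂ] H) (C : ℝ)
    (hmem : ∀ t, T t ∈ (M : Set (H →L[ℂ] H))) (hbd : ∀ t, ‖T t‖ ≤ C)
    (hmem' : T' ∈ (M : Set (H →L[ℂ] H))) (hbd' : ‖T'‖ ≤ C)
    (hconv : WOTConv l T T') :
    Tendsto (fun t => ρ (T t)) l (𝓝 (ρ T')) := by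
  set D : ℝ := max C 1 with hD
  have hD1 : (1:ℝ) ≤ D := le_max_right _ _
  have hD0 : (0:ℝ) < D := lt_of_lt_of_le zero_lt_one hD1
  have hCD : C ≤ D := le_max_left _ _
  set c : ℂ := ((D⁻¹ : ℝ) : ℂ) with hc
  have hcnorm : ‖c‖ = D⁻¹ := by
    rw [hc, Complex.norm_real, Real.norm_eq_abs, abs_of_pos (inv_pos.mpr hD0)]
  have hscale : ∀ A : H →L[ℂ] H, ‖A‖ ≤ C → ‖c • A‖ ≤ 1 := by
    intro A hA
    rw [norm_smul, hcnorm]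
    calc D⁻¹ * ‖A‖ ≤ D⁻¹ * D := by
          gcongr
          exact le_trans hA hCD
      _ = 1 := inv_mul_cancel₀ (ne_of_gt hD0)
  have hmem1 : ∀ t, c • T t ∈ (M : Set (H →L[ℂ] H)) := by
    intro t
    exact Subalgebra.smul_mem M.toStarSubalgebra.toSubalgebra (hmem t) c
  have hmem1' : c • T' ∈ (M : Set (H →L[ℂ] H)) :=
    Subalgebra.smul_mem M.toStarSubalgebra.toSubalgebra hmem' c
  have hconv1 : WOTConv l (fun t => c • T t) (c • T') := by
    intro x y
    have : ∀ A : H →L[ℂ] H, (inner ℂ ((c • A) x) y : ℂ) = (starRingEnd ℂ c) * inner ℂ (A x) y := by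
      intro A
      rw [ContinuousLinearMap.smul_apply, inner_smul_left]
    simp only [this]
    exact (hconv x y).const_mul _
  have h0 := hρ.normal l (fun t => c • T t) (c • T') hmem1
    (fun t => hscale _ (hbd t)) hmem1' (hscale _ hbd') hconv1
  have hρs : ∀ A : H →L[ℂ] H, ρ (c • A) = c * ρ A := fun A => by
    rw [map_smul]; rfl
  simp only [hρs] at h0
  have h1 := h0.const_mul ((D:ℝ) : ℂ)
  have hDc : ((D:ℝ) : ℂ) * (c * ρ T') = ρ T' := by
    rw [hc, ← mul_assoc, ← Complex.ofReal_mul, mul_inv_cancel₀ (ne_of_gt hD0)]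
    simp
  rw [hDc] at h1
  have : (fun t => ((D:ℝ):ℂ) * (c * ρ (T t))) = fun t => ρ (T t) := by
    funext t
    rw [hc, ← mul_assoc, ← Complex.ofReal_mul, mul_inv_cancel₀ (ne_of_gt hD0)]
    simp
  rwa [this] at h1

/-- Key lemma for the hard direction: if the 2-norms of a bounded sequence tend to zero,
then `star (c m) * c m` tends to zero in the weak operator topology. -/
lemma wot_sq_tendsto_zero (M : VonNeumannAlgebra H) {ρ : (H →L[ℂ] H) →ₗ[ℂ] ℂ}
    (hρ : IsFNTState (M : Set (H →L[ℂ] H)) ρ) {c : ℕ → H →L[ℂ] H} {C : ℝ} (hC : 0 ≤ C)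
    (hmem : ∀ m, c m ∈ (M : Set (H →L[ℂ] H))) (hbd : ∀ m, ‖c m‖ ≤ C)
    (hρ0 : Tendsto (fun m => ρ (star (c m) * c m)) atTop (𝓝 0)) :
    WOTConv (atTop : Filter ℕ) (fun m => star (c m) * c m) (0 : H →L[ℂ] H) := by
  classical
  set d : ℕ → H →L[ℂ] H := fun m => star (c m) * c m with hd
  have hdmem : ∀ m, d m ∈ (M : Set (H →L[ℂ] H)) := by
    intro m
    exact mul_mem (star_mem (hmem m)) (hmem m)
  have hdbd : ∀ m, ‖d m‖ ≤ C ^ 2 := by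
    intro m
    calc ‖d m‖ ≤ ‖star (c m)‖ * ‖c m‖ := norm_mul_le _ _
      _ = ‖c m‖ * ‖c m‖ := by rw [norm_star]
      _ ≤ C * C := mul_le_mul (hbd m) (hbd m) (norm_nonneg _) hC
      _ = C ^ 2 := (sq C).symm
  intro x y
  rw [tendsto_iff_ultrafilter]
  intro u hu
  obtain ⟨S, hSmem, hSbd, hSconv⟩ := exists_wot_ultralimit M u d (by positivity) hdmem hdbd
  -- ρ S = 0
  have hρS : ρ S = 0 := by
    have h1 : Tendsto (fun m => ρ (d m)) ↑u (𝓝 (ρ S)) :=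
      rho_tendsto_of_wot M hρ ↑u d S (C ^ 2) hdmem hdbd hSmem hSbd hSconv
    have h2 : Tendsto (fun m => ρ (d m)) ↑u (𝓝 0) := hρ0.mono_left hu
    exact tendsto_nhds_unique h1 h2
  -- S is positive
  have hreal : ∀ (z : H) m, (inner ℂ (d m z) z : ℂ) = ((‖c m z‖ ^ 2 : ℝ) : ℂ) := by
    intro z m
    have h := ContinuousLinearMap.adjoint_inner_left (c m) z (c m z)
    rw [← ContinuousLinearMap.star_eq_adjoint] at h
    calc (inner ℂ (d m z) z : ℂ) = inner ℂ ((star (c m)) ((c m) z)) z := rfl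
      _ = inner ℂ (c m z) (c m z) := h
      _ = ((‖c m z‖ : ℂ)) ^ 2 := inner_self_eq_norm_sq_to_K _
      _ = ((‖c m z‖ ^ 2 : ℝ) : ℂ) := by push_cast; ring
  have hSpos : (0 : H →L[ℂ] H) ≤ S := by
    rw [ContinuousLinearMap.nonneg_iff_isPositive]
    rw [ContinuousLinearMap.isPositive_iff_complex]
    intro z
    have hz : Tendsto (fun m => (inner ℂ (d m z) z : ℂ)) ↑u (𝓝 (inner ℂ (S z) z)) := hSconv z z
    have him : (inner ℂ (S z) z : ℂ).im = 0 := by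
      have h1 : Tendsto (fun m => (inner ℂ (d m z) z : ℂ).im) ↑u (𝓝 ((inner ℂ (S z) z : ℂ).im)) :=
        (Complex.continuous_im.tendsto _).comp hz
      have h2 : Tendsto (fun m => (inner ℂ (d m z) z : ℂ).im) ↑u (𝓝 0) := by
        have : (fun m => (inner ℂ (d m z) z : ℂ).im) = fun _ => (0:ℝ) := by
          funext m; rw [hreal z m]; exact Complex.ofReal_im _
        rw [this]; exact tendsto_const_nhds
      exact tendsto_nhds_unique h1 h2
    have hre : 0 ≤ (inner ℂ (S z) z : ℂ).re := by
      have h1 : Tendsto (fun m => (inner ℂ (d m z) z : ℂ).re) ↑u (𝓝 ((inner ℂ (S z) z : ℂ).re)) :=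
        (Complex.continuous_re.tendsto _).comp hz
      refine le_of_tendsto_of_tendsto tendsto_const_nhds h1 ?_
      refine Filter.univ_mem' (fun m => ?_)
      simp only [Set.mem_setOf_eq]
      rw [hreal z m, Complex.ofReal_re]
      positivity
    constructor
    · rw [Complex.ext_iff]
      constructor
      · simp
      · simpa using him.symm
    · exact hre
  -- conclude S = 0 using faithfulness
  obtain ⟨s, hsM, hss⟩ := exists_sqrt M hSmem hSpos
  have hs0 : s = 0 := by
    apply hρ.faithful s hsM
    rw [hss]
    exact hρS
  have hS0 : S = 0 := by
    rw [← hss, hs0]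
    simp
  rw [hS0] at hSconv
  exact hSconv x y

end Statement1Aux

/-- A type II₁ von Neumann algebra `M` with a faithful normal tracial state
`ρ` has Property Γ̂ (the net/weak-operator-topology version) iff it has Property Γ with
respect to `ρ` (the ε–2-norm version). -/
theorem statement1
    (M : VonNeumannAlgebra H) (hM : IsTypeII1 M)
    (ρ : (H →L[ℂ] H) →ₗ[ℂ] ℂ) (hρ : IsFNTState (M : Set (H →L[ℂ] H)) ρ) :
    PropertyGammaHat M ↔ PropertyGammaOn (M : Set (H →L[ℂ] H)) ρ := by
  constructor
  · -- Γ̂ → Γ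
    intro hhat ε hε n hn k a ha
    obtain ⟨Λ, pre, hne, hdir, p, hp, horth, hequiv, hsum, hwot⟩ := hhat k a
      (fun j => SetLike.mem_coe.mp (ha j)) n hn
    haveI : Nonempty Λ := hne
    haveI : IsDirected Λ (· ≤ ·) := hdir
    haveI : (atTop : Filter Λ).NeBot := atTop_neBot_iff.mpr ⟨hne, hdir⟩
    have hev : ∀ (i : Fin n) (j : Fin k),
        ∀ᶠ lam in atTop, norm2 ρ (p i lam * a j - a j * p i lam) < ε := by
      intro i j
      set cc : Λ → H →L[ℂ] H := fun lam => p i lam * a j - a j * p i lam with hcc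
      have hcmem : ∀ lam, cc lam ∈ (M : Set (H →L[ℂ] H)) := by
        intro lam
        exact sub_mem (mul_mem (SetLike.mem_coe.mpr (hp i lam).1) (ha j))
          (mul_mem (ha j) (SetLike.mem_coe.mpr (hp i lam).1))
      have hcbd : ∀ lam, ‖cc lam‖ ≤ 2 * ‖a j‖ := by
        intro lam
        have hple : ‖p i lam‖ ≤ 1 := norm_le_one_of_isProjection (hp i lam).2
        calc ‖cc lam‖ ≤ ‖p i lam * a j‖ + ‖a j * p i lam‖ := norm_sub_le _ _
          _ ≤ ‖p i lam‖ * ‖a j‖ + ‖a j‖ * ‖p i lam‖ := by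
              gcongr <;> exact norm_mul_le _ _
          _ ≤ 1 * ‖a j‖ + ‖a j‖ * 1 := by gcongr <;> exact hple
          _ = 2 * ‖a j‖ := by ring
      have hdbd : ∀ lam, ‖star (cc lam) * cc lam‖ ≤ (2 * ‖a j‖) ^ 2 := by
        intro lam
        calc ‖star (cc lam) * cc lam‖ ≤ ‖star (cc lam)‖ * ‖cc lam‖ := norm_mul_le _ _
          _ = ‖cc lam‖ * ‖cc lam‖ := by rw [norm_star]
          _ ≤ (2 * ‖a j‖) * (2 * ‖a j‖) :=
              mul_le_mul (hcbd lam) (hcbd lam) (norm_nonneg _) (by positivity)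
          _ = (2 * ‖a j‖) ^ 2 := (sq _).symm
      have h0 : Tendsto (fun lam => ρ (star (cc lam) * cc lam)) atTop (𝓝 0) := by
        have := rho_tendsto_of_wot M hρ atTop (fun lam => star (cc lam) * cc lam)
          (0 : H →L[ℂ] H) ((2 * ‖a j‖) ^ 2)
          (fun lam => mul_mem (star_mem (hcmem lam)) (hcmem lam)) hdbd
          (zero_mem _) (by rw [norm_zero]; positivity) (hwot i j)
        simpa using this
      have hre : Tendsto (fun lam => (ρ (star (cc lam) * cc lam)).re) atTop (𝓝 0) := by
        have := (Complex.continuous_re.tendsto 0).comp h0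
        simpa [Function.comp_def] using this
      have hlt : ∀ᶠ lam in atTop, (ρ (star (cc lam) * cc lam)).re < ε ^ 2 :=
        hre.eventually_lt_const (by positivity)
      refine hlt.mono (fun lam hlam => ?_)
      rw [norm2]
      exact (Real.sqrt_lt' hε).mpr hlam
    have hall : ∀ᶠ lam in atTop, ∀ (i : Fin n) (j : Fin k),
        norm2 ρ (p i lam * a j - a j * p i lam) < ε :=
      eventually_all.mpr fun i => eventually_all.mpr fun j => hev i j
    obtain ⟨lam, hlam⟩ := hall.exists
    exact ⟨fun i => p i lam,
      fun i => ⟨SetLike.mem_coe.mpr (hp i lam).1, (hp i lam).2⟩,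
      fun i j hij => horth lam i j hij,
      fun i j => hequiv lam i j,
      hsum lam,
      hlam⟩
  · -- Γ → Γ̂
    intro hgam k a ha n hn
    refine ⟨ℕ, inferInstance, ⟨0⟩, inferInstance, ?_⟩
    have hch : ∀ m : ℕ, ∃ p : Fin n → H →L[ℂ] H,
        (∀ i, p i ∈ (M : Set (H →L[ℂ] H)) ∧ IsProjection (p i)) ∧
        (∀ i j, i ≠ j → p i * p j = 0) ∧
        (∀ i j, EquivProj (M : Set (H →L[ℂ] H)) (p i) (p j)) ∧
        (∑ i, p i) = 1 ∧
        ∀ i j, norm2 ρ (p i * a j - a j * p i) < 1 / ((m : ℝ) + 1) := by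
      intro m
      exact hgam (1 / ((m : ℝ) + 1)) (by positivity) n hn k a
        (fun j => SetLike.mem_coe.mpr (ha j))
    choose p h1 h2 h3 h4 h5 using hch
    refine ⟨fun i m => p m i,
      fun i lam => ⟨SetLike.mem_coe.mp (h1 lam i).1, (h1 lam i).2⟩,
      fun lam i j hij => h2 lam i j hij,
      fun lam i j => h3 lam i j,
      fun lam => h4 lam,
      ?_⟩
    intro i j
    set cc : ℕ → H →L[ℂ] H := fun m => p m i * a j - a j * p m i with hcc
    have hcmem : ∀ m, cc m ∈ (M : Set (H →L[ℂ] H)) := by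
      intro m
      exact sub_mem (mul_mem (SetLike.mem_coe.mpr (SetLike.mem_coe.mp (h1 m i).1)) (SetLike.mem_coe.mpr (ha j)))
        (mul_mem (SetLike.mem_coe.mpr (ha j)) (h1 m i).1)
    have hcbd : ∀ m, ‖cc m‖ ≤ 2 * ‖a j‖ := by
      intro m
      have hple : ‖p m i‖ ≤ 1 := norm_le_one_of_isProjection (h1 m i).2
      calc ‖cc m‖ ≤ ‖p m i * a j‖ + ‖a j * p m i‖ := norm_sub_le _ _
        _ ≤ ‖p m i‖ * ‖a j‖ + ‖a j‖ * ‖p m i‖ := by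
            gcongr <;> exact norm_mul_le _ _
        _ ≤ 1 * ‖a j‖ + ‖a j‖ * 1 := by gcongr <;> exact hple
        _ = 2 * ‖a j‖ := by ring
    have hρ0 : Tendsto (fun m => ρ (star (cc m) * cc m)) atTop (𝓝 0) := by
      have hnn : ∀ m, (0 : ℂ) ≤ ρ (star (cc m) * cc m) :=
        fun m => hρ.nonneg (cc m) (hcmem m)
      have hrebd : ∀ m, (ρ (star (cc m) * cc m)).re < (1 / ((m : ℝ) + 1)) ^ 2 := by
        intro m
        have := h5 m i j
        rw [norm2] at this
        exact Real.lt_sq_of_sqrt_lt this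
      have hre0 : ∀ m, 0 ≤ (ρ (star (cc m) * cc m)).re := by
        intro m
        have := hnn m
        rw [Complex.le_def] at this
        simpa using this.1
      have him0 : ∀ m, (ρ (star (cc m) * cc m)).im = 0 := by
        intro m
        have := hnn m
        rw [Complex.le_def] at this
        simpa using this.2.symm
      have hretend : Tendsto (fun m => (ρ (star (cc m) * cc m)).re) atTop (𝓝 0) := by
        refine squeeze_zero hre0 (fun m => le_of_lt (hrebd m)) ?_
        have h1 : Tendsto (fun m : ℕ => 1 / ((m : ℝ) + 1)) atTop (𝓝 0) :=
          tendsto_one_div_add_atTop_nhds_zero_nat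
        simpa using h1.pow 2
      have heq : (fun m => ρ (star (cc m) * cc m))
          = fun m => (((ρ (star (cc m) * cc m)).re : ℝ) : ℂ) := by
        funext m
        rw [Complex.ext_iff]
        constructor
        · simp
        · simp [him0 m]
      rw [heq]
      have := (Complex.continuous_ofReal.tendsto 0).comp hretend
      simpa [Function.comp_def] using this
    have := wot_sq_tendsto_zero M hρ (by positivity : (0:ℝ) ≤ 2 * ‖a j‖) hcmem hcbd hρ0
    exact this


end Paper
end
end

section
/- Let H be a separable complex Hilbert space and M a von Neumann algebra on H of type II₁ with a faithful normal tracial state ρ. Then M has Property Γ with respect to ρ if and only if for every positive integer n there exists a family of projections {p_{ir} : 1 ≤ i ≤ n, r ∈ ℕ} in M such that (i) for each r ∈ ℕ the projections p_{1r},…,p_{nr} are mutually orthogonal, pairwise equivalent in M, and sum to 1, and (ii) for each 1 ≤ i ≤ n and every a ∈ M, lim_{r→∞} ‖p_{ir} a − a p_{ir}‖₂ = 0. -/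
set_option maxHeartbeats 1000000
set_option synthInstance.maxHeartbeats 400000

open scoped ComplexOrder
open Filter Topology

noncomputable section

namespace Paper

variable {H : Type*} [NormedAddCommGroup H] [InnerProductSpace ℂ H] [CompleteSpace H]

section Helpers

variable {M : VonNeumannAlgebra H} {ρ : (H →L[ℂ] H) →ₗ[ℂ] ℂ}

lemma re_nonneg (hn : ∀ a ∈ (M : Set (H →L[ℂ] H)), 0 ≤ ρ (star a * a))
    {a : H →L[ℂ] H} (ha : a ∈ M) : 0 ≤ (ρ (star a * a)).re :=
  (Complex.le_def.1 (hn a ha)).1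

lemma norm2_nonneg (a : H →L[ℂ] H) : 0 ≤ norm2 ρ a := Real.sqrt_nonneg _

lemma norm2_sq (hn : ∀ a ∈ (M : Set (H →L[ℂ] H)), 0 ≤ ρ (star a * a))
    {a : H →L[ℂ] H} (ha : a ∈ M) : norm2 ρ a ^ 2 = (ρ (star a * a)).re :=
  Real.sq_sqrt (re_nonneg hn ha)

lemma norm2_neg (a : H →L[ℂ] H) : norm2 ρ (-a) = norm2 ρ a := by
  unfold norm2; rw [star_neg, neg_mul_neg]

lemma norm2_smul (c : ℂ) (a : H →L[ℂ] H) : norm2 ρ (c • a) = ‖c‖ * norm2 ρ a := by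
  unfold norm2
  have h1 : star (c • a) * (c • a) = ((starRingEnd ℂ) c * c) • (star a * a) := by
    rw [star_smul, smul_mul_smul_comm, mul_comm, RCLike.star_def, mul_comm]
  have h2 : (starRingEnd ℂ) c * c = ((‖c‖ ^ 2 : ℝ) : ℂ) := by
    rw [mul_comm, Complex.mul_conj']
    norm_cast
  rw [h1, map_smul, h2]
  have : (((‖c‖ ^ 2 : ℝ) : ℂ) * ρ (star a * a)).re = ‖c‖ ^ 2 * (ρ (star a * a)).re := by
    rw [Complex.re_ofReal_mul]
  rw [show ((‖c‖ ^ 2 : ℝ) : ℂ) • ρ (star a * a) = ((‖c‖ ^ 2 : ℝ) : ℂ) * ρ (star a * a) from rfl,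
    this, Real.sqrt_mul (sq_nonneg _), Real.sqrt_sq (norm_nonneg c)]

lemma norm2_sq_add_le (hn : ∀ a ∈ (M : Set (H →L[ℂ] H)), 0 ≤ ρ (star a * a))
    {x y : H →L[ℂ] H} (hx : x ∈ M) (hy : y ∈ M) :
    norm2 ρ (x + y) ^ 2 ≤ 2 * norm2 ρ x ^ 2 + 2 * norm2 ρ y ^ 2 := by
  have hxy : x + y ∈ M := add_mem hx hy
  have hxy' : x - y ∈ M := sub_mem hx hy
  rw [norm2_sq hn hxy, norm2_sq hn hx, norm2_sq hn hy]
  have hid : star (x + y) * (x + y)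
      = star x * x + star x * x + (star y * y + star y * y) - star (x - y) * (x - y) := by
    simp only [star_add, star_sub]
    noncomm_ring
  have := re_nonneg hn (ρ := ρ) hxy'
  rw [hid]
  simp only [map_sub, map_add, Complex.sub_re, Complex.add_re]
  linarith

lemma norm2_sq_add3_le (hn : ∀ a ∈ (M : Set (H →L[ℂ] H)), 0 ≤ ρ (star a * a))
    {u v w : H →L[ℂ] H} (hu : u ∈ M) (hv : v ∈ M) (hw : w ∈ M) :
    norm2 ρ (u + v + w) ^ 2 ≤ 4 * norm2 ρ u ^ 2 + 4 * norm2 ρ v ^ 2 + 2 * norm2 ρ w ^ 2 := by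
  have h1 := norm2_sq_add_le hn (add_mem hu hv) hw
  have h2 := norm2_sq_add_le hn hu hv
  nlinarith [norm2_nonneg (ρ := ρ) (u + v), norm2_nonneg (ρ := ρ) w]


lemma norm2_proj_mul_le (hn : ∀ a ∈ (M : Set (H →L[ℂ] H)), 0 ≤ ρ (star a * a))
    {p b : H →L[ℂ] H} (hp : p ∈ M) (hpp : IsProjection p) (hb : b ∈ M) :
    norm2 ρ (p * b) ≤ norm2 ρ b := by
  set q : H →L[ℂ] H := 1 - p with hqdef
  have hqM : q ∈ M := sub_mem (one_mem _) hp
  have hqs : star q = q := by rw [hqdef, star_sub, star_one, hpp.1]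
  have e1 : star (p * b) * (p * b) = star b * (p * b) := by
    rw [star_mul, hpp.1]
    calc star b * p * (p * b) = star b * ((p * p) * b) := by noncomm_ring
      _ = star b * (p * b) := by rw [hpp.2]
  have hqq : q * q = q := by
    rw [hqdef]
    calc (1 - p) * (1 - p) = 1 - p - p + p * p := by noncomm_ring
      _ = 1 - p := by rw [hpp.2]; abel
  have e2 : star (q * b) * (q * b) = star b * (q * b) := by
    rw [star_mul, hqs]
    calc star b * q * (q * b) = star b * ((q * q) * b) := by noncomm_ring
      _ = star b * (q * b) := by rw [hqq]
  have e3 : star b * (p * b) + star b * (q * b) = star b * b := by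
    rw [hqdef]; noncomm_ring
  have key : (ρ (star (p*b) * (p*b))).re + (ρ (star (q*b) * (q*b))).re = (ρ (star b * b)).re := by
    rw [e1, e2, ← Complex.add_re, ← map_add, e3]
  have hge := re_nonneg hn (ρ := ρ) (mul_mem hqM hb)
  unfold norm2
  exact Real.sqrt_le_sqrt (by linarith)

lemma norm2_mul_proj_le (hn : ∀ a ∈ (M : Set (H →L[ℂ] H)), 0 ≤ ρ (star a * a))
    (htr : ∀ a ∈ (M : Set (H →L[ℂ] H)), ∀ b ∈ (M : Set (H →L[ℂ] H)), ρ (a * b) = ρ (b * a))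
    {p b : H →L[ℂ] H} (hp : p ∈ M) (hpp : IsProjection p) (hb : b ∈ M) :
    norm2 ρ (b * p) ≤ norm2 ρ b := by
  set q : H →L[ℂ] H := 1 - p with hqdef
  have hqM : q ∈ M := sub_mem (one_mem _) hp
  have hqs : star q = q := by rw [hqdef, star_sub, star_one, hpp.1]
  have hqq : q * q = q := by
    rw [hqdef]
    calc (1 - p) * (1 - p) = 1 - p - p + p * p := by noncomm_ring
      _ = 1 - p := by rw [hpp.2]; abel
  set c : H →L[ℂ] H := star b * b with hcdef
  have hcM : c ∈ M := mul_mem (star_mem hb) hb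
  have h1 : star (b * p) * (b * p) = p * (c * p) := by
    rw [star_mul, hpp.1, hcdef]; noncomm_ring
  have h2 : ρ (p * (c * p)) = ρ (c * p) := by
    rw [htr p hp (c * p) (mul_mem hcM hp), mul_assoc, hpp.2]
  have h3 : star (b * q) * (b * q) = q * (c * q) := by
    rw [star_mul, hqs, hcdef]; noncomm_ring
  have h4 : ρ (q * (c * q)) = ρ (c * q) := by
    rw [htr q hqM (c * q) (mul_mem hcM hqM), mul_assoc, hqq]
  have e3 : c * p + c * q = c := by rw [hqdef]; noncomm_ring
  have key : (ρ (star (b*p) * (b*p))).re + (ρ (star (b*q) * (b*q))).re = (ρ (star b * b)).re := by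
    rw [h1, h3, ← Complex.add_re]
    rw [show ρ (p * (c * p)) + ρ (q * (c * q)) = ρ (c * p) + ρ (c * q) by rw [h2, h4]]
    rw [← map_add, e3]
  have hge := re_nonneg hn (ρ := ρ) (mul_mem hb hqM)
  have : star (b * q) * (b * q) = star (b * q) * (b * q) := rfl
  unfold norm2
  exact Real.sqrt_le_sqrt (by linarith)

lemma norm2_tendsto_zero (hρ : IsFNTState (M : Set (H →L[ℂ] H)) ρ) {b : ℕ → H →L[ℂ] H}
    (hbM : ∀ n, b n ∈ M) (hb2 : ∀ n, ‖b n‖ ≤ 2)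
    (hconv : ∀ v : H, Tendsto (fun n => b n v) atTop (𝓝 0)) :
    Tendsto (fun n => norm2 ρ (b n)) atTop (𝓝 0) := by
  set c : ℕ → H →L[ℂ] H := fun n => ((4:ℂ)⁻¹) • (star (b n) * b n) with hc
  have hcM : ∀ n, c n ∈ M := fun n => M.toStarSubalgebra.smul_mem (mul_mem (star_mem (hbM n)) (hbM n)) _
  have hc1 : ∀ n, ‖c n‖ ≤ 1 := by
    intro n
    have h1 : ‖star (b n) * b n‖ ≤ 4 := by
      calc ‖star (b n) * b n‖ ≤ ‖star (b n)‖ * ‖b n‖ := norm_mul_le _ _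
        _ = ‖b n‖ * ‖b n‖ := by rw [norm_star]
        _ ≤ 2 * 2 := mul_le_mul (hb2 n) (hb2 n) (norm_nonneg _) (by norm_num)
        _ = 4 := by norm_num
    calc ‖c n‖ = ‖(4:ℂ)⁻¹‖ * ‖star (b n) * b n‖ := norm_smul _ _
      _ ≤ (1/4) * 4 := by
          apply mul_le_mul _ h1 (norm_nonneg _) (by norm_num)
          simp
      _ = 1 := by norm_num
  have hWOT : WOTConv atTop c 0 := by
    intro x y
    have heq : ∀ n, (inner ℂ (c n x) y : ℂ) = (starRingEnd ℂ) ((4:ℂ)⁻¹) * inner ℂ ((b n) x) ((b n) y) := by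
      intro n
      have : c n x = ((4:ℂ)⁻¹) • ((star (b n)) ((b n) x)) := rfl
      rw [this, inner_smul_left, ContinuousLinearMap.star_eq_adjoint,
        ContinuousLinearMap.adjoint_inner_left]
    simp only [ContinuousLinearMap.zero_apply, inner_zero_left]
    rw [tendsto_congr heq]
    rw [show (0:ℂ) = (starRingEnd ℂ) ((4:ℂ)⁻¹) * 0 by ring]
    apply Tendsto.const_mul
    apply squeeze_zero_norm (a := fun n => (2 * ‖y‖) * ‖(b n) x‖)
    · intro n
      calc ‖(inner ℂ ((b n) x) ((b n) y) : ℂ)‖ ≤ ‖(b n) x‖ * ‖(b n) y‖ := norm_inner_le_norm _ _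
        _ ≤ ‖(b n) x‖ * (2 * ‖y‖) := by
            apply mul_le_mul_of_nonneg_left _ (norm_nonneg _)
            calc ‖(b n) y‖ ≤ ‖b n‖ * ‖y‖ := (b n).le_opNorm y
              _ ≤ 2 * ‖y‖ := mul_le_mul_of_nonneg_right (hb2 n) (norm_nonneg _)
        _ = (2 * ‖y‖) * ‖(b n) x‖ := by ring
    · rw [show (0:ℝ) = (2 * ‖y‖) * 0 by ring]
      exact Tendsto.const_mul _ (tendsto_zero_iff_norm_tendsto_zero.1 (hconv x))
  have hnormal := hρ.normal atTop c 0 hcM hc1 (zero_mem _) (by simp) (by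
    intro x y
    simpa using hWOT x y)
  have hρ0 : ρ (0 : H →L[ℂ] H) = 0 := map_zero ρ
  rw [hρ0] at hnormal
  have hρb : Tendsto (fun n => ρ (star (b n) * b n)) atTop (𝓝 0) := by
    have : ∀ n, ρ (star (b n) * b n) = 4 * ρ (c n) := by
      intro n
      rw [hc]
      simp only [map_smul]
      rw [smul_eq_mul, ← mul_assoc]
      norm_num
    rw [tendsto_congr this, show (0:ℂ) = 4 * 0 by ring]
    exact Tendsto.const_mul _ hnormal
  have hre : Tendsto (fun n => (ρ (star (b n) * b n)).re) atTop (𝓝 0) := by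
    have := (Complex.continuous_re.tendsto 0).comp hρb
    simpa [Function.comp_def] using this
  have := (Real.continuous_sqrt.tendsto 0).comp hre
  simpa [norm2, Real.sqrt_zero, Function.comp_def] using this

lemma exists_dense_seq [TopologicalSpace.SeparableSpace H]
    (hρ : IsFNTState (M : Set (H →L[ℂ] H)) ρ) :
    ∃ d : ℕ → H →L[ℂ] H, (∀ m, d m ∈ M) ∧
      ∀ a ∈ M, ‖a‖ ≤ 1 → ∀ ε : ℝ, 0 < ε → ∃ m, norm2 ρ (a - d m) < ε := by
  haveI : Nonempty H := ⟨0⟩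
  haveI : SecondCountableTopology H := UniformSpace.secondCountable_of_separable H
  set x : ℕ → H := TopologicalSpace.denseSeq H with hxdef
  have hx : DenseRange x := TopologicalSpace.denseRange_denseSeq H
  set S : Set (H →L[ℂ] H) := {T | T ∈ M ∧ ‖T‖ ≤ 1} with hSdef
  have hS0 : (0 : H →L[ℂ] H) ∈ S := ⟨zero_mem _, by simp⟩
  set Φ : S → (ℕ → H) := fun T m => T.1 (x m) with hΦdef
  set R : Set (ℕ → H) := Set.range Φ with hRdef
  haveI : Nonempty ↥R := ⟨⟨Φ ⟨0, hS0⟩, Set.mem_range_self _⟩⟩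
  obtain ⟨s, hsc, hsd⟩ := TopologicalSpace.exists_countable_dense ↥R
  obtain ⟨e, hse⟩ := hsc.exists_eq_range hsd.nonempty
  -- choose preimages
  have hpre : ∀ m : ℕ, ∃ T : S, Φ T = (e m).1 := by
    intro m
    have : (e m : ℕ → H) ∈ R := (e m).2
    exact this
  choose T hT using hpre
  refine ⟨fun m => (T m).1, fun m => (T m).2.1, ?_⟩
  intro a haM ha1 ε hε
  set A : ↥S := ⟨a, haM, ha1⟩ with hAdef
  have hmem : (⟨Φ A, Set.mem_range_self A⟩ : ↥R) ∈ closure s := hsd _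
  rw [mem_closure_iff_seq_limit] at hmem
  obtain ⟨σ, hσs, hσlim⟩ := hmem
  have hσe : ∀ n, ∃ k, e k = σ n := by
    intro n
    have : σ n ∈ Set.range e := hse ▸ hσs n
    obtain ⟨k, hk⟩ := this
    exact ⟨k, hk⟩
  choose k hk using hσe
  set b : ℕ → H →L[ℂ] H := fun n => a - (T (k n)).1 with hbdef
  have hbM : ∀ n, b n ∈ M := fun n => sub_mem haM (T (k n)).2.1
  have hb2 : ∀ n, ‖b n‖ ≤ 2 := by
    intro n
    calc ‖a - (T (k n)).1‖ ≤ ‖a‖ + ‖(T (k n)).1‖ := norm_sub_le _ _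
      _ ≤ 1 + 1 := add_le_add ha1 (T (k n)).2.2
      _ = 2 := by norm_num
  -- pointwise convergence at the dense sequence
  have hptx : ∀ m : ℕ, Tendsto (fun n => b n (x m)) atTop (𝓝 0) := by
    intro m
    have hval : Tendsto (fun n => (σ n : ℕ → H)) atTop (𝓝 (Φ A)) :=
      (continuous_subtype_val.tendsto _).comp hσlim
    have hm : Tendsto (fun n => (σ n : ℕ → H) m) atTop (𝓝 (Φ A m)) :=
      (tendsto_pi_nhds.1 hval) m
    have hsongm : ∀ n, (σ n : ℕ → H) m = (T (k n)).1 (x m) := by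
      intro n
      rw [← hk n]
      exact congrFun (hT (k n)).symm m
    have hΦAm : Φ A m = a (x m) := rfl
    rw [hΦAm] at hm
    have : Tendsto (fun n => a (x m) - (T (k n)).1 (x m)) atTop (𝓝 (a (x m) - a (x m))) := by
      apply Tendsto.sub tendsto_const_nhds
      rw [tendsto_congr (fun n => (hsongm n).symm)]
      exact hm
    simpa [hbdef, sub_self] using this
  -- upgrade to all vectors
  have hconv : ∀ v : H, Tendsto (fun n => b n v) atTop (𝓝 0) := by
    intro v
    rw [tendsto_zero_iff_norm_tendsto_zero]
    rw [Metric.tendsto_atTop]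
    intro δ hδ
    obtain ⟨m, hm⟩ := hx.exists_dist_lt v (show (0:ℝ) < δ/4 by linarith)
    have hxm := hptx m
    rw [tendsto_zero_iff_norm_tendsto_zero, Metric.tendsto_atTop] at hxm
    obtain ⟨N, hN⟩ := hxm (δ/4) (by linarith)
    refine ⟨N, fun n hn => ?_⟩
    have h1 : ‖b n (x m)‖ < δ/4 := by
      have := hN n hn
      rw [Real.dist_eq] at this
      calc ‖b n (x m)‖ = |‖b n (x m)‖ - 0| := by rw [sub_zero]; exact (abs_of_nonneg (norm_nonneg _)).symm
        _ < δ/4 := this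
    have h2 : ‖b n v‖ ≤ ‖b n (v - x m)‖ + ‖b n (x m)‖ := by
      calc ‖b n v‖ = ‖b n (v - x m) + b n (x m)‖ := by rw [← map_add]; norm_num
        _ ≤ _ := norm_add_le _ _
    have h3 : ‖b n (v - x m)‖ ≤ 2 * ‖v - x m‖ := by
      calc ‖b n (v - x m)‖ ≤ ‖b n‖ * ‖v - x m‖ := (b n).le_opNorm _
        _ ≤ 2 * ‖v - x m‖ := mul_le_mul_of_nonneg_right (hb2 n) (norm_nonneg _)
    have h4 : ‖v - x m‖ < δ/4 := by
      rw [← dist_eq_norm]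
      exact hm
    rw [Real.dist_eq, sub_zero, abs_of_nonneg (norm_nonneg _)]
    linarith
  have := norm2_tendsto_zero hρ hbM hb2 hconv
  rw [Metric.tendsto_atTop] at this
  obtain ⟨N, hN⟩ := this ε hε
  refine ⟨k N, ?_⟩
  have := hN N le_rfl
  rw [Real.dist_eq, sub_zero] at this
  calc norm2 ρ (a - (T (k N)).1) = |norm2 ρ (b N)| := by
        rw [hbdef]; exact (abs_of_nonneg (Real.sqrt_nonneg _)).symm
    _ < ε := this

end Helpers

/-- For a type II₁ von Neumann algebra `M` on a separable Hilbert space with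
faithful normal tracial state `ρ` : `M` has Property Γ iff for every `n ≥ 1` there is a family
of projections `{p_{ir}}` (each row mutually orthogonal, pairwise equivalent, summing to `1`)
with `‖p_{ir} a − a p_{ir}‖₂ → 0` as `r → ∞` for every `a ∈ M`. -/
theorem statement3 [TopologicalSpace.SeparableSpace H]
    (M : VonNeumannAlgebra H) (hM : IsTypeII1 M)
    (ρ : (H →L[ℂ] H) →ₗ[ℂ] ℂ) (hρ : IsFNTState (M : Set (H →L[ℂ] H)) ρ) :
    PropertyGammaOn (M : Set (H →L[ℂ] H)) ρ ↔
      ∀ n : ℕ, 0 < n →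
        ∃ p : Fin n → ℕ → H →L[ℂ] H,
          (∀ i r, p i r ∈ M ∧ IsProjection (p i r)) ∧
          (∀ r, ∀ i j, i ≠ j → p i r * p j r = 0) ∧
          (∀ r i j, EquivProj (M : Set (H →L[ℂ] H)) (p i r) (p j r)) ∧
          (∀ r, (∑ i, p i r) = 1) ∧
          ∀ i, ∀ a ∈ M, Tendsto (fun r => norm2 ρ (p i r * a - a * p i r)) atTop (𝓝 0) := by
  constructor
  · -- Property Γ implies the sequential version
    intro hΓ n hn
    obtain ⟨d, hdM, hdD⟩ := exists_dense_seq hρ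
    have hex : ∀ r : ℕ, ∃ p : Fin n → H →L[ℂ] H,
        (∀ i, p i ∈ (M : Set (H →L[ℂ] H)) ∧ IsProjection (p i)) ∧
        (∀ i j, i ≠ j → p i * p j = 0) ∧
        (∀ i j, EquivProj (M : Set (H →L[ℂ] H)) (p i) (p j)) ∧
        (∑ i, p i) = 1 ∧
        ∀ i (j : Fin r), norm2 ρ (p i * d j - d j * p i) < 1 / (r + 1) := by
      intro r
      exact hΓ (1 / (r + 1)) (by positivity) n hn r (fun j => d j) (fun j => hdM j)
    choose P h1 h2 h3 h4 h5 using hex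
    refine ⟨fun i r => P r i, fun i r => h1 r i, fun r => h2 r, fun r i j => h3 r i j,
      fun r => h4 r, ?_⟩
    -- the limit statement; first for elements of the unit ball
    have core : ∀ (i : Fin n), ∀ a ∈ M, ‖a‖ ≤ 1 →
        Tendsto (fun r => norm2 ρ (P r i * a - a * P r i)) atTop (𝓝 0) := by
      intro i a haM ha1
      rw [Metric.tendsto_atTop]
      intro ε hε
      obtain ⟨m, hm⟩ := hdD a haM ha1 (ε / 4) (by linarith)
      obtain ⟨N0, hN0⟩ := exists_nat_gt (4 / ε)
      refine ⟨max N0 (m + 1), fun r hr => ?_⟩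
      have hrN0 : (N0 : ℝ) ≤ r := by exact_mod_cast le_trans (le_max_left _ _) hr
      have hmr : m < r := lt_of_lt_of_le (Nat.lt_succ_self m) (le_trans (le_max_right _ _) hr)
      have hsmall : 1 / ((r : ℝ) + 1) < ε / 4 := by
        have h4ε : (0:ℝ) < 4 / ε := by positivity
        have h' : 4 < ((r:ℝ) + 1) * ε := (div_lt_iff₀ hε).1 (by linarith)
        rw [div_lt_div_iff₀ (by positivity) (by norm_num : (0:ℝ) < 4)]
        nlinarith
      have hcm : norm2 ρ (P r i * d m - d m * P r i) < ε / 4 :=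
        lt_trans (h5 r i ⟨m, hmr⟩) hsmall
      set p := P r i with hpdef
      have hpM : p ∈ M := (h1 r i).1
      have hpP : IsProjection p := (h1 r i).2
      set E : H →L[ℂ] H := a - d m with hEdef
      have hEM : E ∈ M := sub_mem haM (hdM m)
      have hEn : norm2 ρ E < ε / 4 := hm
      set u : H →L[ℂ] H := p * E with hudef
      set v : H →L[ℂ] H := -(E * p) with hvdef
      set w : H →L[ℂ] H := p * d m - d m * p with hwdef
      have hsplit : p * a - a * p = u + v + w := by
        rw [hudef, hvdef, hwdef, hEdef]; noncomm_ring
      have huM : u ∈ M := mul_mem hpM hEM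
      have hvM : v ∈ M := neg_mem (mul_mem hEM hpM)
      have hwM : w ∈ M := sub_mem (mul_mem hpM (hdM m)) (mul_mem (hdM m) hpM)
      have hu : norm2 ρ u ≤ norm2 ρ E := norm2_proj_mul_le hρ.nonneg hpM hpP hEM
      have hv : norm2 ρ v ≤ norm2 ρ E := by
        rw [hvdef, norm2_neg]
        exact norm2_mul_proj_le hρ.nonneg hρ.tracial hpM hpP hEM
      have hsq := norm2_sq_add3_le hρ.nonneg huM hvM hwM
      have hfin : norm2 ρ (p * a - a * p) < ε := by
        rw [hsplit]
        have h0u := norm2_nonneg (ρ := ρ) u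
        have h0v := norm2_nonneg (ρ := ρ) v
        have h0w := norm2_nonneg (ρ := ρ) w
        have h0E := norm2_nonneg (ρ := ρ) E
        have h0s := norm2_nonneg (ρ := ρ) (u + v + w)
        nlinarith [hsq, hu, hv, hcm, hEn]
      rw [Real.dist_eq, sub_zero, abs_of_nonneg (norm2_nonneg _)]
      exact hfin
    intro i a haM
    set c : ℝ := ‖a‖ + 1 with hcdef
    have hc0 : (0:ℝ) < c := by positivity
    set a' : H →L[ℂ] H := ((c : ℂ)⁻¹) • a with ha'def
    have ha'M : a' ∈ M := M.toStarSubalgebra.smul_mem haM _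
    have ha'1 : ‖a'‖ ≤ 1 := by
      rw [ha'def, norm_smul]
      have : ‖((c:ℂ)⁻¹)‖ = c⁻¹ := by
        rw [norm_inv, Complex.norm_real, Real.norm_of_nonneg hc0.le]
      rw [this, hcdef]
      rw [inv_mul_le_iff₀ (by positivity), mul_one]
      linarith
    have hrescale : ∀ q : H →L[ℂ] H, q * a - a * q = (c : ℂ) • (q * a' - a' * q) := by
      intro q
      have haa : ((c : ℂ)) • a' = a := by
        rw [ha'def, smul_smul, mul_inv_cancel₀, one_smul]
        exact_mod_cast hc0.ne'
      conv_lhs => rw [← haa]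
      rw [mul_smul_comm, smul_mul_assoc, ← smul_sub]
    have hnorm : ∀ q : H →L[ℂ] H, norm2 ρ (q * a - a * q) = c * norm2 ρ (q * a' - a' * q) := by
      intro q
      rw [hrescale q, norm2_smul]
      congr 1
      rw [Complex.norm_real, Real.norm_of_nonneg hc0.le]
    have := (core i a' ha'M ha'1).const_mul c
    rw [mul_zero] at this
    refine Tendsto.congr (fun r => ?_) this
    exact (hnorm (P r i)).symm
  · -- the sequential version implies Property Γ
    intro h ε hε n hn k a ha
    obtain ⟨p, h1, h2, h3, h4, h5⟩ := h n hn
    have hev : ∀ᶠ r in (atTop : Filter ℕ), ∀ ij : Fin n × Fin k,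
        norm2 ρ (p ij.1 r * a ij.2 - a ij.2 * p ij.1 r) < ε := by
      rw [eventually_all]
      rintro ⟨i, j⟩
      exact (h5 i (a j) (ha j)).eventually (gt_mem_nhds hε)
    obtain ⟨r, hr⟩ := hev.exists
    exact ⟨fun i => p i r, fun i => h1 i r, h2 r, fun i j => h3 r i j, h4 r,
      fun i j => hr (i, j)⟩

end Paper
end
end

section
/- Let H be a complex Hilbert space, M a von Neumann algebra on H, p ∈ M a projection, and k ≥ 2 an integer. Let φ : M^k → B(H) be a k-linear map satisfying p φ(a₁, a₂,…,a_k) = φ(p a₁, a₂,…,a_k) and φ(a₁,…,a_i p, a_{i+1},…,a_k) = φ(a₁,…,a_i, p a_{i+1},…,a_k) for all a₁,…,a_k ∈ M and 1 ≤ i ≤ k−1. Then for all a₁,…,a_k ∈ M, p φ(a₁,…,a_k) − p φ(a₁p, a₂p,…,a_kp) = Σ over nonempty subsets σ of {1,…,k} of (−1)^{|σ|+1} p φ_{σ,p}(a₁,…,a_k). -/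
set_option maxHeartbeats 1000000
set_option synthInstance.maxHeartbeats 400000

open scoped ComplexOrder
open Filter Topology

noncomputable section

namespace Paper

variable {H : Type*} [NormedAddCommGroup H] [InnerProductSpace ℂ H] [CompleteSpace H]

/-- first half of Lemma 5.1 of the paper, i.e. Lemma 6.1 of [EFAR2].
For `k = k'+2 ≥ 2` and a `k`-linear map `φ` compatible with the projection `p` as in
(5.1.1)–(5.1.2), `p φ(a₁,…,a_k) − p φ(a₁p,…,a_kp)
  = Σ_{∅ ≠ σ ⊆ {1,…,k}} (−1)^{|σ|+1} p φ_{σ,p}(a₁,…,a_k)`. -/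
theorem statement12
    (M : VonNeumannAlgebra H) (p : H →L[ℂ] H) (hpM : p ∈ M) (hp : IsProjection p)
    (k : ℕ)
    (φ : MultilinearMap ℂ (fun _ : Fin (k + 2) => H →L[ℂ] H) (H →L[ℂ] H))
    (hmod1 : ∀ a : Fin (k + 2) → H →L[ℂ] H, (∀ i, a i ∈ M) →
      p * φ a = φ (Function.update a 0 (p * a 0)))
    (hmod2 : ∀ a : Fin (k + 2) → H →L[ℂ] H, (∀ i, a i ∈ M) → ∀ i : Fin (k + 1),
      φ (Function.update a i.castSucc (a i.castSucc * p))
        = φ (Function.update a i.succ (p * a i.succ)))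
    (a : Fin (k + 2) → H →L[ℂ] H) (ha : ∀ i, a i ∈ M) :
    p * φ a - p * φ (fun i => a i * p)
      = ∑ σ ∈ Finset.univ.erase (∅ : Finset (Fin (k + 2))),
          (-1 : ℂ) ^ (σ.card + 1) • (p * phiSigma ⇑φ p σ a) := by
  classical
  have hpp : p * p = p := hp.2
  set c : Fin (k + 2) → (H →L[ℂ] H) := fun i => p * a i - a i * p with hc
  -- Part B: for any tuple t with p * t i = p * a i * p, p * φ t is a fixed element
  have key : ∀ t : Fin (k + 2) → (H →L[ℂ] H), (∀ i, t i ∈ M) →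
      (∀ i, p * t i = p * a i * p) →
      p * φ t = φ (fun i => if (i : ℕ) < k + 1 then p * a i else p * a i * p) := by
    intro t ht hpt
    set F : ℕ → (H →L[ℂ] H) := fun j => φ (fun i =>
      if (i : ℕ) < j then p * a i else if (i : ℕ) = j then p * a i * p else t i) with hF
    have h0 : p * φ t = F 0 := by
      rw [hmod1 t ht]
      congr 1
      funext i
      by_cases hi : i = 0
      · subst hi
        simp [Function.update_self, hpt 0]
      · have hi' : (i : ℕ) ≠ 0 := fun h => hi (Fin.ext h)
        simp [Function.update_of_ne hi, hi', hF]
    have hstep : ∀ j : ℕ, j < k + 1 → F j = F (j + 1) := by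
      intro j hj
      set i0 : Fin (k + 1) := ⟨j, hj⟩ with hi0
      set b : Fin (k + 2) → (H →L[ℂ] H) := fun i =>
        if (i : ℕ) < j then p * a i else if (i : ℕ) = j then p * a i else t i with hb
      have hbM : ∀ i, b i ∈ M := by
        intro i
        simp only [hb]
        split_ifs <;> first | exact M.mul_mem hpM (ha i) | exact ht i
      have key2 := hmod2 b hbM i0
      have hcast : ((i0.castSucc : Fin (k+2)) : ℕ) = j := rfl
      have hsucc : ((i0.succ : Fin (k+2)) : ℕ) = j + 1 := rfl
      have hbcast : b i0.castSucc = p * a i0.castSucc := by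
        simp [hb, hcast, show (i0 : ℕ) = j from rfl]
      have hbsucc : b i0.succ = t i0.succ := by
        simp [hb, hsucc, show (i0 : ℕ) = j from rfl]
      have hL : Function.update b i0.castSucc (b i0.castSucc * p)
          = fun i : Fin (k + 2) => if (i : ℕ) < j then p * a i else if (i : ℕ) = j then p * a i * p else t i := by
        funext i
        by_cases hij : i = i0.castSucc
        · subst hij
          simp [Function.update_self, hbcast, hcast, show (i0 : ℕ) = j from rfl]
        · have hij' : (i : ℕ) ≠ j := by
            intro h; exact hij (Fin.ext (by rw [h, hcast]))
          simp only [Function.update_of_ne hij, hb, hij', if_false]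
      have hR : Function.update b i0.succ (p * b i0.succ)
          = fun i : Fin (k + 2) => if (i : ℕ) < j + 1 then p * a i
              else if (i : ℕ) = j + 1 then p * a i * p else t i := by
        funext i
        by_cases hij : i = i0.succ
        · subst hij
          simp [Function.update_self, hbsucc, hsucc, hpt, show (i0 : ℕ) = j from rfl]
        · have hij' : (i : ℕ) ≠ j + 1 := by
            intro h; exact hij (Fin.ext (by rw [h, hsucc]))
          simp only [Function.update_of_ne hij, hb, hij', if_false]
          by_cases h1 : (i : ℕ) < j
          · simp [h1, Nat.lt_succ_of_lt h1]
          · by_cases h2 : (i : ℕ) = j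
            · simp [h2, h1]
            · have h3 : ¬ (i : ℕ) < j + 1 := by omega
              simp [h1, h2, h3]
      rw [hL] at key2
      rw [hR] at key2
      exact key2
    have hiter : ∀ j : ℕ, j ≤ k + 1 → F 0 = F j := by
      intro j
      induction j with
      | zero => intro _; rfl
      | succ m ih =>
          intro hm
          rw [ih (Nat.le_of_succ_le hm), hstep m (Nat.lt_of_succ_le hm)]
    have hfin : F (k + 1) = φ (fun i => if (i : ℕ) < k + 1 then p * a i else p * a i * p) := by
      have hb : F (k + 1) = φ (fun i : Fin (k + 2) =>
          if (i : ℕ) < k + 1 then p * a i else if (i : ℕ) = k + 1 then p * a i * p else t i) := rfl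
      rw [hb]
      congr 1
      funext i
      by_cases h1 : (i : ℕ) < k + 1
      · simp [h1]
      · have h2 : (i : ℕ) = k + 1 := by have := i.isLt; omega
        simp [h1, h2]
    rw [h0, hiter (k + 1) le_rfl, hfin]
  have hB1 : p * φ (fun i => a i - c i)
      = φ (fun i => if (i : ℕ) < k + 1 then p * a i else p * a i * p) := by
    refine key _ (fun i => M.sub_mem (ha i) (M.sub_mem (M.mul_mem hpM (ha i)) (M.mul_mem (ha i) hpM))) (fun i => ?_)
    simp only [hc, mul_sub, ← mul_assoc, hpp]
    abel
  have hB2 : p * φ (fun i => a i * p)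
      = φ (fun i => if (i : ℕ) < k + 1 then p * a i else p * a i * p) := by
    refine key _ (fun i => M.mul_mem (ha i) hpM) (fun i => ?_)
    rw [mul_assoc]
  -- Part A: multilinear expansion
  have expand : φ (fun i => a i - c i)
      = ∑ σ : Finset (Fin (k + 2)), (-1 : ℂ) ^ σ.card • φ (σ.piecewise c a) := by
    have h1 : (fun i => a i - c i) = (fun i => -(c i)) + a := by
      funext i; simp [sub_eq_neg_add]
    rw [h1, φ.map_add_univ]
    refine Finset.sum_congr rfl (fun σ _ => ?_)
    have h2 : σ.piecewise (fun i => -(c i)) a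
        = σ.piecewise (fun i => (-1 : ℂ) • (σ.piecewise c a) i) (σ.piecewise c a) := by
      funext i
      by_cases hi : i ∈ σ <;>
        simp [Finset.piecewise_eq_of_mem _ _ _, Finset.piecewise, hi]
    rw [h2, φ.map_piecewise_smul]
    simp
  have hphi : ∀ σ : Finset (Fin (k + 2)), phiSigma ⇑φ p σ a = φ (σ.piecewise c a) := by
    intro σ
    unfold phiSigma
    congr 1
  have hsum : ∑ σ : Finset (Fin (k + 2)), (-1 : ℂ) ^ σ.card • (p * phiSigma ⇑φ p σ a)
      = p * φ (fun i => a i - c i) := by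
    rw [expand, Finset.mul_sum]
    refine Finset.sum_congr rfl (fun σ _ => ?_)
    rw [hphi σ, mul_smul_comm]
  have hsplit : ∑ σ : Finset (Fin (k + 2)), (-1 : ℂ) ^ σ.card • (p * phiSigma ⇑φ p σ a)
      = (p * phiSigma ⇑φ p ∅ a)
        + ∑ σ ∈ Finset.univ.erase (∅ : Finset (Fin (k + 2))),
            (-1 : ℂ) ^ σ.card • (p * phiSigma ⇑φ p σ a) := by
    rw [← Finset.add_sum_erase _ _ (Finset.mem_univ (∅ : Finset (Fin (k + 2))))]
    simp
  have hempty : phiSigma ⇑φ p ∅ a = φ a := by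
    unfold phiSigma; simp
  have hfinal : ∑ σ ∈ Finset.univ.erase (∅ : Finset (Fin (k + 2))),
      (-1 : ℂ) ^ (σ.card + 1) • (p * phiSigma ⇑φ p σ a)
      = - ∑ σ ∈ Finset.univ.erase (∅ : Finset (Fin (k + 2))),
          (-1 : ℂ) ^ σ.card • (p * phiSigma ⇑φ p σ a) := by
    rw [← Finset.sum_neg_distrib]
    refine Finset.sum_congr rfl (fun σ _ => ?_)
    rw [pow_succ, mul_neg_one, neg_smul]
  rw [hfinal]
  have h5 : ∑ σ ∈ Finset.univ.erase (∅ : Finset (Fin (k + 2))),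
      (-1 : ℂ) ^ σ.card • (p * phiSigma ⇑φ p σ a)
      = p * φ (fun i => a i - c i) - p * φ a := by
    have h := hsplit
    rw [hsum, hempty] at h
    rw [h]
    abel
  rw [h5, hB1, ← hB2]
  abel

end Paper
end
end

section
/- Let H be a complex Hilbert space, M a von Neumann algebra on H, p ∈ M a projection, and k ≥ 2 an integer. Let φ : M^k → B(H) be a k-linear map satisfying p φ(a₁, a₂,…,a_k) = φ(p a₁, a₂,…,a_k) and φ(a₁,…,a_i p, a_{i+1},…,a_k) = φ(a₁,…,a_i, p a_{i+1},…,a_k) for all a₁,…,a_k ∈ M and 1 ≤ i ≤ k−1. Then for every nonempty subset σ of {1,…,k} with least element l(σ) and all a₁,…,a_k ∈ M, p φ_{σ,p}(a₁,…,a_k) = Σ_{i=1}^{l(σ)} φ_{σ,p,i}(a₁,…,a_k). -/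
set_option maxHeartbeats 1000000
set_option synthInstance.maxHeartbeats 400000

open scoped ComplexOrder
open Filter Topology

noncomputable section

namespace Paper

variable {H : Type*} [NormedAddCommGroup H] [InnerProductSpace ℂ H] [CompleteSpace H]

/-- second half of Lemma 5.1 of the paper, i.e. Lemma 6.1 of [EFAR2].
For every nonempty `σ ⊆ {1,…,k}` with least element `l(σ)`,
`p φ_{σ,p}(a₁,…,a_k) = Σ_{i=1}^{l(σ)} φ_{σ,p,i}(a₁,…,a_k)` (here `k = k'+2 ≥ 2`). -/
theorem statement13
    (M : VonNeumannAlgebra H) (p : H →L[ℂ] H) (hpM : p ∈ M) (hp : IsProjection p)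
    (k : ℕ)
    (φ : MultilinearMap ℂ (fun _ : Fin (k + 2) => H →L[ℂ] H) (H →L[ℂ] H))
    (hmod1 : ∀ a : Fin (k + 2) → H →L[ℂ] H, (∀ i, a i ∈ M) →
      p * φ a = φ (Function.update a 0 (p * a 0)))
    (hmod2 : ∀ a : Fin (k + 2) → H →L[ℂ] H, (∀ i, a i ∈ M) → ∀ i : Fin (k + 1),
      φ (Function.update a i.castSucc (a i.castSucc * p))
        = φ (Function.update a i.succ (p * a i.succ)))
    (a : Fin (k + 2) → H →L[ℂ] H) (ha : ∀ i, a i ∈ M)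
    (σ : Finset (Fin (k + 2))) (hσ : σ.Nonempty) :
    p * phiSigma ⇑φ p σ a
      = ∑ i ∈ Finset.univ.filter (fun i : Fin (k + 2) => i ≤ σ.min' hσ),
          phiSigmaI ⇑φ p σ hσ i a := by
  have hLσ : σ.min' hσ ∈ σ := σ.min'_mem hσ
  set L := σ.min' hσ with hLdef
  set b : Fin (k+2) → (H →L[ℂ] H) := fun i => if i ∈ σ then p * a i - a i * p else a i with hb
  have hbM : ∀ i, b i ∈ M := by
    intro i
    by_cases h : i ∈ σ <;> simp only [hb, h, if_true, if_false]
    · exact sub_mem (mul_mem hpM (ha i)) (mul_mem (ha i) hpM)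
    · exact ha i
  have hnot : ∀ i : Fin (k+2), (i:ℕ) < (L:ℕ) → i ∉ σ := by
    intro i hi hmem
    have h1 : L ≤ i := σ.min'_le i hmem
    have h2 : i < L := Fin.lt_def.mpr hi
    exact absurd h1 (not_le.mpr h2)
  have hphiS : phiSigma ⇑φ p σ a = φ b := rfl
  have hphiI : ∀ i : Fin (k+2), phiSigmaI (⇑φ) p σ hσ i a
      = φ (Function.update b i
          (if i = L then p * (p * a i - a i * p) else p * a i - a i * p)) := by
    intro i
    simp only [phiSigmaI]
    congr 1
    funext j
    by_cases hji : j = i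
    · subst hji; simp [hLdef]
    · simp [Function.update_of_ne hji, hji, hb]
  have key : ∀ n : ℕ, ∀ hn : n ≤ (L:ℕ),
      p * φ b
        = (∑ i ∈ Finset.univ.filter (fun i : Fin (k+2) => (i:ℕ) < n),
            φ (Function.update b i (p * a i - a i * p)))
          + φ (Function.update b ⟨n, Nat.lt_of_le_of_lt hn L.isLt⟩
              (p * b ⟨n, Nat.lt_of_le_of_lt hn L.isLt⟩)) := by
    intro n
    induction n with
    | zero =>
      intro hn
      have h0 := hmod1 b hbM
      have he : Finset.univ.filter (fun i : Fin (k+2) => (i:ℕ) < 0) = ∅ := by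
        ext i; simp
      rw [he, Finset.sum_empty, zero_add]
      exact h0
    | succ n ih =>
      intro hn
      have hn' : n ≤ (L:ℕ) := Nat.le_of_succ_le hn
      have hnL : n < (L:ℕ) := hn
      have hnk : n < k + 2 := Nat.lt_of_le_of_lt hn' L.isLt
      have hnk1 : n < k + 1 := by
        have := L.isLt; omega
      set jn : Fin (k+2) := ⟨n, hnk⟩ with hjn
      have hbjn : b jn = a jn := by
        simp only [hb]; rw [if_neg (hnot jn hnL)]
      -- step from the induction hypothesis
      rw [ih hn']
      have hsplit : p * b jn = (p * a jn - a jn * p) + (b jn * p) := by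
        rw [hbjn, sub_add_cancel]
      have hupd : Function.update b ⟨n, Nat.lt_of_le_of_lt hn' L.isLt⟩
          (p * b ⟨n, Nat.lt_of_le_of_lt hn' L.isLt⟩) = Function.update b jn (p * b jn) := rfl
      rw [hupd, hsplit, φ.map_update_add]
      -- the (b jn * p) term shifts to position n+1
      have hj : Fin (k+1) := ⟨n, hnk1⟩
      have hshift := hmod2 b hbM ⟨n, hnk1⟩
      have hcs : (⟨n, hnk1⟩ : Fin (k+1)).castSucc = jn := rfl
      have hsc : (⟨n, hnk1⟩ : Fin (k+1)).succ
          = (⟨n+1, Nat.lt_of_le_of_lt hn L.isLt⟩ : Fin (k+2)) := rfl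
      rw [hcs, hsc] at hshift
      rw [hshift]
      -- rearrange the sum
      have hins : Finset.univ.filter (fun i : Fin (k+2) => (i:ℕ) < n+1)
          = insert jn (Finset.univ.filter (fun i : Fin (k+2) => (i:ℕ) < n)) := by
        ext i
        simp only [Finset.mem_insert, Finset.mem_filter, Finset.mem_univ, true_and,
          hjn, Fin.ext_iff]
        omega
      rw [hins, Finset.sum_insert (by simp [hjn])]
      abel
  -- conclude
  have hmain := key (L:ℕ) le_rfl
  have hLeta : (⟨(L:ℕ), Nat.lt_of_le_of_lt le_rfl L.isLt⟩ : Fin (k+2)) = L := by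
    exact Fin.ext rfl
  rw [hLeta] at hmain
  have hbL : b L = p * a L - a L * p := by simp only [hb]; rw [if_pos hLσ]
  rw [hbL] at hmain
  -- rewrite RHS
  have hfilter : Finset.univ.filter (fun i : Fin (k+2) => i ≤ L)
      = insert L (Finset.univ.filter (fun i : Fin (k+2) => (i:ℕ) < (L:ℕ))) := by
    ext i
    simp only [Finset.mem_insert, Finset.mem_filter, Finset.mem_univ, true_and,
      Fin.le_def, Fin.ext_iff]
    omega
  have hsum : ∑ i ∈ Finset.univ.filter (fun i : Fin (k+2) => (i:ℕ) < (L:ℕ)),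
      phiSigmaI (⇑φ) p σ hσ i a
      = ∑ i ∈ Finset.univ.filter (fun i : Fin (k+2) => (i:ℕ) < (L:ℕ)),
          φ (Function.update b i (p * a i - a i * p)) := by
    refine Finset.sum_congr rfl fun i hi => ?_
    have hiL : (i:ℕ) < (L:ℕ) := (Finset.mem_filter.mp hi).2
    have hne : i ≠ L := by intro h; subst h; exact lt_irrefl _ hiL
    rw [hphiI i, if_neg hne]
  rw [hphiS, hfilter, Finset.sum_insert (by simp), hsum, hphiI L, if_pos rfl, hmain]
  abel


end Paper
end
end
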